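/- (Theorem 3, estimate of the energy descent) Fix a number of classes R ≥ 1 and a timestep Δ > 0. Let C ⊆ ℝ^{N×R} be a nonempty convex set, and write a matrix F ∈ ℝ^{N×R} as F = [f_1, …, f_R] with columns f_r ∈ ℝ^N. Let F^k = [f_1^k, …, f_R^k] ∈ C with B(f_r^k) ≠ 0 for all r, set c_r = Δ/B(f_r^k) and d_r = Δ·E(f_r^k)/B(f_r^k) where E(f) := T(f)/B(f), define 𝓣(F) := ∑_{r=1}^R c_r T(f_r) and 𝓑(F) := ∑_{r=1}^R d_r B(f_r), let V^k be a matrix whose r-th column is d_r times the subgradient vector of B at f_r^k given by the Theorem 2 formula, and suppose F^{k+1} minimizes G ↦ 𝓣(G) + (1/2)‖G − (F^k + V^k)‖_F² over C. Then F^{k+1} ∈ C, and if additionally B(f_r^{k+1}) ≠ 0 for all r, then ∑_{r=1}^R (B(f_r^{k+1})/B(f_r^k))·(E(f_r^k) − E(f_r^{k+1})) ≥ ‖F^k − F^{k+1}‖_F² / Δ. -/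

import Mathlib

/-- Total variation of a vertex function on the weighted graph with weights `w`. -/
def totalVariation (N : ℕ) (w : Fin N → Fin N → ℝ) (f : Fin N → ℝ) : ℝ :=
  ∑ i, ∑ j, w i j * |f i - f j|

/-- Asymmetric absolute value: `|t|_λ = λt` if `t ≥ 0` and `-t` if `t < 0`. -/
noncomputable def asymAbs (lam t : ℝ) : ℝ := if 0 ≤ t then lam * t else -t

/-- The λ-median of `f`: the (k+1)-st largest entry (counted with multiplicity)
of the vector `(f x₁, …, f x_N)`, where `k = ⌊N/(λ+1)⌋`. -/
noncomputable def lamMedian (N : ℕ) (lam : ℝ) (f : Fin N → ℝ) : ℝ :=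
  ((Finset.univ.val.map f).sort (· ≥ ·)).getD (Nat.floor ((N : ℝ) / (lam + 1))) 0

/-- The balance functional `B(f) = ‖f − med_λ(f)·1‖_{1,λ}`. -/
noncomputable def balanceFun (N : ℕ) (lam : ℝ) (f : Fin N → ℝ) : ℝ :=
  ∑ i, asymAbs lam (f i - lamMedian N lam f)

/-- The subgradient vector of `B` at `f` from the Theorem 2 formula. -/
noncomputable def medSubgrad (N : ℕ) (lam : ℝ) (f : Fin N → ℝ) : Fin N → ℝ := fun i =>
  if lamMedian N lam f < f i then lam
  else if f i < lamMedian N lam f then -1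
  else
    (((Finset.univ.filter fun j => f j < lamMedian N lam f).card : ℝ) -
        lam * ((Finset.univ.filter fun j => lamMedian N lam f < f j).card : ℝ)) /
      ((Finset.univ.filter fun j => f j = lamMedian N lam f).card : ℝ)

/-- The cluster energy `E(f) = T(f)/B(f)`. -/
noncomputable def clusterEnergy (N : ℕ) (w : Fin N → Fin N → ℝ) (lam : ℝ)
    (f : Fin N → ℝ) : ℝ :=
  totalVariation N w f / balanceFun N lam f

set_option linter.unusedVariables false
set_option linter.deprecated false

lemma asymAbs_nonneg (lam : ℝ) (hlam : 0 < lam) (t : ℝ) : 0 ≤ asymAbs lam t := by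
  unfold asymAbs; split <;> nlinarith
lemma asymAbs_ge_left (lam : ℝ) (hlam : 0 < lam) (s : ℝ) : lam * s ≤ asymAbs lam s := by
  unfold asymAbs; split <;> nlinarith
lemma asymAbs_ge_right (lam : ℝ) (hlam : 0 < lam) (s : ℝ) : -s ≤ asymAbs lam s := by
  unfold asymAbs; split <;> nlinarith

lemma asymAbs_subgrad (lam : ℝ) (hlam : 0 < lam) (s t v : ℝ)
    (hv1 : -1 ≤ v) (hv2 : v ≤ lam) (ht1 : 0 < t → v = lam) (ht2 : t < 0 → v = -1) :
    asymAbs lam t + v * (s - t) ≤ asymAbs lam s := by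
  rcases lt_trichotomy t 0 with h | h | h
  · rw [ht2 h]
    have h2 := asymAbs_ge_right lam hlam s
    rw [asymAbs, if_neg (not_le.2 h)]
    nlinarith
  · subst h
    rw [asymAbs, if_pos le_rfl]
    have h2 := asymAbs_ge_right lam hlam s
    have h3 := asymAbs_ge_left lam hlam s
    rcases le_or_gt 0 s with hs | hs
    · nlinarith
    · nlinarith
  · rw [ht1 h, asymAbs, if_pos h.le]
    have h3 := asymAbs_ge_left lam hlam s
    nlinarith

lemma median_facts (N : ℕ) (lam : ℝ) (hlam : 0 < lam)
    (hk : Nat.floor ((N : ℝ) / (lam + 1)) + 1 ≤ N) (f : Fin N → ℝ) :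
    (∃ i, f i = lamMedian N lam f) ∧
    ((Finset.univ.filter fun j => lamMedian N lam f < f j).card ≤ Nat.floor ((N:ℝ)/(lam+1))) ∧
    (Nat.floor ((N:ℝ)/(lam+1)) + 1 ≤ (Finset.univ.filter fun j => lamMedian N lam f ≤ f j).card) := by
  set k := Nat.floor ((N:ℝ)/(lam+1)) with hkdef
  set l := ((Finset.univ.val.map f).sort (· ≥ ·)) with hldef
  have hl : l.length = N := by simp [hldef, Multiset.length_sort]
  have hkl : k < l.length := by omega
  have hm : lamMedian N lam f = l[k] := List.getD_eq_getElem l 0 hkl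
  have hs : l.Pairwise (· ≥ ·) := Multiset.pairwise_sort _ _
  -- translation of filter cards to countP on l
  have hcount : ∀ (p : ℝ → Prop) [DecidablePred p],
      (Finset.univ.filter fun j => p (f j)).card = l.countP (fun x => decide (p x)) := by
    intro p _
    have h0 : (Finset.univ.filter fun j => p (f j)).card
        = Multiset.card (Multiset.filter (fun a => p (f a)) Finset.univ.val) := rfl
    rw [h0, ← Multiset.countP_map, ← Multiset.sort_eq (Finset.univ.val.map f) (· ≥ ·),
      Multiset.coe_countP]
  constructor
  · -- m is an entry
    have h1 : l[k] ∈ l := List.getElem_mem _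
    have h2 : lamMedian N lam f ∈ Finset.univ.val.map f := by
      rw [hm, ← Multiset.sort_eq (Finset.univ.val.map f) (· ≥ ·)]
      exact Multiset.mem_coe.2 h1
    obtain ⟨a, _, ha⟩ := Multiset.mem_map.1 h2
    exact ⟨a, ha⟩
  constructor
  · -- n+ ≤ k
    rw [hcount]
    have hsplit : l.countP (fun x => decide (lamMedian N lam f < x)) =
        (l.take k).countP (fun x => decide (lamMedian N lam f < x))
          + (l.drop k).countP (fun x => decide (lamMedian N lam f < x)) := by
      rw [← List.countP_append, List.take_append_drop]
    rw [hsplit]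
    have hdrop : (l.drop k).countP (fun x => decide (lamMedian N lam f < x)) = 0 := by
      apply List.countP_eq_zero.2
      intro a ha
      simp only [decide_eq_true_eq, not_lt]
      rw [hm]
      -- a ∈ l.drop k → a ≤ l[k]
      rw [List.drop_eq_getElem_cons hkl] at ha
      rcases List.mem_cons.1 ha with rfl | ha
      · exact le_rfl
      · have hd : (l.drop k).Pairwise (· ≥ ·) := hs.drop
        rw [List.drop_eq_getElem_cons hkl, List.pairwise_cons] at hd
        exact hd.1 a ha
    rw [hdrop]
    have := List.countP_le_length (l := l.take k) (p := fun x => decide (lamMedian N lam f < x))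
    simp only [List.length_take, hl] at this
    omega
  · -- k+1 ≤ n+ + n0
    rw [hcount]
    have hsplit : l.countP (fun x => decide (lamMedian N lam f ≤ x)) =
        (l.take (k+1)).countP (fun x => decide (lamMedian N lam f ≤ x))
          + (l.drop (k+1)).countP (fun x => decide (lamMedian N lam f ≤ x)) := by
      rw [← List.countP_append, List.take_append_drop]
    rw [hsplit]
    have htake : (l.take (k+1)).countP (fun x => decide (lamMedian N lam f ≤ x)) =
        (l.take (k+1)).length := by
      apply List.countP_eq_length.2
      intro a ha
      simp only [decide_eq_true_eq]
      obtain ⟨i, hi, rfl⟩ := List.getElem_of_mem ha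
      have hi' : i < k + 1 := by simp at hi; omega
      rw [List.getElem_take]
      rw [hm]
      have := hs.rel_get_of_le (a := ⟨i, by omega⟩) (b := ⟨k, hkl⟩) (by simp; omega)
      simpa [List.get_eq_getElem] using this
    rw [htake]
    simp only [List.length_take, hl]
    omega

lemma tv_nonneg (N : ℕ) (w : Fin N → Fin N → ℝ) (hnonneg : ∀ i j, 0 ≤ w i j)
    (f : Fin N → ℝ) : 0 ≤ totalVariation N w f := by
  apply Finset.sum_nonneg; intro i _
  apply Finset.sum_nonneg; intro j _
  exact mul_nonneg (hnonneg i j) (abs_nonneg _)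

lemma tv_convex (N : ℕ) (w : Fin N → Fin N → ℝ) (hnonneg : ∀ i j, 0 ≤ w i j)
    (a b : Fin N → ℝ) (t : ℝ) (h0 : 0 ≤ t) (h1 : t ≤ 1) :
    totalVariation N w (fun i => (1-t) * a i + t * b i)
      ≤ (1-t) * totalVariation N w a + t * totalVariation N w b := by
  unfold totalVariation
  rw [Finset.mul_sum, Finset.mul_sum, ← Finset.sum_add_distrib]
  apply Finset.sum_le_sum
  intro i _
  rw [Finset.mul_sum, Finset.mul_sum, ← Finset.sum_add_distrib]
  apply Finset.sum_le_sum
  intro j _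
  have habs : |((1-t)*a i + t*b i) - ((1-t)*a j + t*b j)| ≤ (1-t)*|a i - a j| + t*|b i - b j| := by
    have : ((1-t)*a i + t*b i) - ((1-t)*a j + t*b j) = (1-t)*(a i - a j) + t*(b i - b j) := by ring
    rw [this]
    calc |(1-t)*(a i - a j) + t*(b i - b j)| ≤ |(1-t)*(a i - a j)| + |t*(b i - b j)| := abs_add_le _ _
      _ = (1-t)*|a i - a j| + t*|b i - b j| := by
          rw [abs_mul, abs_mul, abs_of_nonneg (by linarith : (0:ℝ) ≤ 1 - t), abs_of_nonneg h0]
  calc w i j * |((1-t)*a i + t*b i) - ((1-t)*a j + t*b j)|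
      ≤ w i j * ((1-t)*|a i - a j| + t*|b i - b j|) :=
        mul_le_mul_of_nonneg_left habs (hnonneg i j)
    _ = (1-t)*(w i j * |a i - a j|) + t*(w i j * |b i - b j|) := by ring

lemma subgrad_ineq (N : ℕ) (lam : ℝ) (hlam : 0 < lam)
    (hk : Nat.floor ((N : ℝ) / (lam + 1)) + 1 ≤ N) (f g : Fin N → ℝ) :
    balanceFun N lam f + ∑ i, medSubgrad N lam f i * (g i - f i) ≤ balanceFun N lam g := by
  set k := Nat.floor ((N:ℝ)/(lam+1)) with hkdef
  set m := lamMedian N lam f with hmdef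
  set m' := lamMedian N lam g with hm'def
  obtain ⟨⟨i0, hi0⟩, hnp, hnpn0⟩ := median_facts N lam hlam hk f
  set np := (Finset.univ.filter fun j => m < f j).card with hnpdef
  set n0 := (Finset.univ.filter fun j => f j = m).card with hn0def
  set nm := (Finset.univ.filter fun j => f j < m).card with hnmdef
  -- cardinal identities
  have hunion : (Finset.univ.filter fun j => m ≤ f j)
      = (Finset.univ.filter fun j => m < f j) ∪ (Finset.univ.filter fun j => f j = m) := by
    ext j
    simp only [Finset.mem_union, Finset.mem_filter, Finset.mem_univ, true_and]
    constructor
    · intro h; rcases lt_or_eq_of_le h with h | h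
      · exact Or.inl h
      · exact Or.inr h.symm
    · rintro (h | h)
      · exact h.le
      · exact h.ge
  have hdisj : Disjoint (Finset.univ.filter fun j => m < f j)
      (Finset.univ.filter fun j => f j = m) := by
    rw [Finset.disjoint_filter]
    intro j _ h1 h2
    exact absurd h2 (by intro h; rw [h] at h1; exact lt_irrefl m h1)
  have h1 : (Finset.univ.filter fun j => m ≤ f j).card = np + n0 := by
    rw [hunion, Finset.card_union_of_disjoint hdisj]
  have h2 : np + n0 + nm = N := by
    have h3 := Finset.card_filter_add_card_filter_not
      (s := (Finset.univ : Finset (Fin N))) (p := fun j => m ≤ f j)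
    simp only [not_le] at h3
    rw [h1] at h3
    simpa [← hnmdef, Finset.card_univ] using h3
  have h0 : 1 ≤ n0 := by
    have : i0 ∈ Finset.univ.filter fun j => f j = m := by
      simp [hi0, hmdef]
    rw [hn0def]
    exact Finset.card_pos.2 ⟨i0, this⟩
  -- real versions
  have hn0R : (0:ℝ) < n0 := by exact_mod_cast Nat.cast_pos.2 h0
  have hfl1 : (k:ℝ) * (lam + 1) ≤ N := by
    have h4 : (0:ℝ) ≤ (N:ℝ)/(lam+1) := by positivity
    have h5 : (k:ℝ) ≤ (N:ℝ)/(lam+1) := Nat.floor_le h4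
    rw [← le_div_iff₀ (by linarith : (0:ℝ) < lam + 1)]
    linarith
  have hfl2 : (N:ℝ) < ((k:ℝ)+1) * (lam + 1) := by
    have h5 : (N:ℝ)/(lam+1) < (k:ℝ)+1 := by
      have := Nat.lt_floor_add_one ((N:ℝ)/(lam+1))
      push_cast at this ⊢
      linarith
    rw [div_lt_iff₀ (by linarith : (0:ℝ) < lam + 1)] at h5
    linarith
  have hnpR : (np:ℝ) ≤ (k:ℝ) := by exact_mod_cast hnp
  have hnpn0R : (k:ℝ) + 1 ≤ (np:ℝ) + n0 := by
    have := h1 ▸ hnpn0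
    push_cast
    exact_mod_cast this
  have hNR : (np:ℝ) + n0 + nm = N := by exact_mod_cast h2
  have key1 : lam * np ≤ (nm:ℝ) + n0 := by nlinarith
  have key2 : (nm:ℝ) ≤ lam * ((np:ℝ) + n0) := by nlinarith
  set c : ℝ := ((nm:ℝ) - lam * np) / n0 with hcdef
  have hc1 : -1 ≤ c := by
    rw [hcdef, le_div_iff₀ hn0R]
    linarith
  have hc2 : c ≤ lam := by
    rw [hcdef, div_le_iff₀ hn0R]
    linarith
  -- description of v
  set v := medSubgrad N lam f with hvdef
  have hveq : ∀ i, v i = if m < f i then lam else if f i < m then -1 else c := by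
    intro i
    rw [hvdef, medSubgrad, hcdef, ← hmdef, ← hnmdef, ← hnpdef, ← hn0def]
  have hv1 : ∀ i, -1 ≤ v i := by
    intro i; rw [hveq]; split_ifs <;> linarith
  have hv2 : ∀ i, v i ≤ lam := by
    intro i; rw [hveq]; split_ifs <;> linarith
  -- sum of v is zero
  have hvsum : ∑ i, v i = 0 := by
    have : ∀ i, v i = (if m < f i then lam else 0) + (if f i < m then (-1:ℝ) else 0)
        + (if f i = m then c else 0) := by
      intro i
      rw [hveq]
      rcases lt_trichotomy (f i) m with h | h | h
      · simp [h, not_lt.2 h.le, ne_of_lt h]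
      · simp [h]
      · simp [h, not_lt.2 h.le, (ne_of_gt h)]
    rw [Finset.sum_congr rfl (fun i _ => this i), Finset.sum_add_distrib,
      Finset.sum_add_distrib]
    rw [← Finset.sum_filter, ← Finset.sum_filter, ← Finset.sum_filter]
    rw [Finset.sum_const, Finset.sum_const, Finset.sum_const]
    simp only [nsmul_eq_mul, ← hnpdef, ← hnmdef, ← hn0def]
    have hc3 : (n0:ℝ) * c = (nm:ℝ) - lam * np := by
      rw [hcdef, mul_comm, div_mul_cancel₀ _ (ne_of_gt hn0R)]
    rw [hc3]
    ring
  -- pointwise inequality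
  have hpt : ∀ i, asymAbs lam (f i - m) + v i * ((g i - m') - (f i - m))
      ≤ asymAbs lam (g i - m') := by
    intro i
    apply asymAbs_subgrad lam hlam _ _ _ (hv1 i) (hv2 i)
    · intro h
      rw [hveq, if_pos (by linarith)]
    · intro h
      rw [hveq, if_neg (by linarith), if_pos (by linarith)]
  have hsum := Finset.sum_le_sum (fun i (_ : i ∈ Finset.univ) => hpt i)
  rw [Finset.sum_add_distrib] at hsum
  have hrw : ∑ i, v i * ((g i - m') - (f i - m))
      = ∑ i, v i * (g i - f i) + (∑ i, v i) * (m - m') := by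
    rw [Finset.sum_mul, ← Finset.sum_add_distrib]
    exact Finset.sum_congr rfl (fun i _ => by ring)
  rw [hrw, hvsum] at hsum
  simp only [zero_mul, add_zero] at hsum
  calc balanceFun N lam f + ∑ i, medSubgrad N lam f i * (g i - f i)
      = (∑ i, asymAbs lam (f i - m)) + ∑ i, v i * (g i - f i) := by
        rw [balanceFun, hmdef, hvdef]
    _ ≤ ∑ i, asymAbs lam (g i - m') := hsum
    _ = balanceFun N lam g := by rw [balanceFun, hm'def]

lemma double_sum_comb (R N : ℕ) (a b c : Fin R → Fin N → ℝ) (α β : ℝ) :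
    ∑ r, ∑ i, (a r i + α * b r i + β * c r i)
      = (∑ r, ∑ i, a r i) + α * (∑ r, ∑ i, b r i) + β * (∑ r, ∑ i, c r i) := by
  simp only [Finset.sum_add_distrib, Finset.mul_sum]

lemma balance_nonneg (N : ℕ) (lam : ℝ) (hlam : 0 < lam) (f : Fin N → ℝ) :
    0 ≤ balanceFun N lam f :=
  Finset.sum_nonneg fun i _ => asymAbs_nonneg lam hlam _

/-- Theorem 3, estimate of the energy descent.  A matrix
`F ∈ ℝ^{N×R}` is represented by its tuple of columns `F : Fin R → Fin N → ℝ`.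
With `c_r = Δ/B(f_r^k)`, `d_r = Δ·E(f_r^k)/B(f_r^k)`, `𝓣(F) = ∑ c_r T(f_r)`,
`V^k` the matrix whose r-th column is `d_r` times the Theorem-2 subgradient of `B`
at `f_r^k`, and `F^{k+1}` minimizing `G ↦ 𝓣(G) + (1/2)‖G − (F^k + V^k)‖_F²` over the
nonempty convex set `C ∋ F^k`:  then `F^{k+1} ∈ C` and, when `B(f_r^{k+1}) ≠ 0` for
all `r`, `∑_r (B_r^{k+1}/B_r^k)(E_r^k − E_r^{k+1}) ≥ ‖F^k − F^{k+1}‖_F²/Δ`. -/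
theorem energy_descent_estimate (N R : ℕ) (hN : 0 < N) (hR : 1 ≤ R)
    (w : Fin N → Fin N → ℝ) (hsymm : ∀ i j, w i j = w j i) (hnonneg : ∀ i j, 0 ≤ w i j)
    (lam : ℝ) (hlam : 0 < lam) (hk : Nat.floor ((N : ℝ) / (lam + 1)) + 1 ≤ N)
    (Δ : ℝ) (hΔ : 0 < Δ)
    (C : Set (Fin R → Fin N → ℝ)) (hCne : C.Nonempty) (hCconv : Convex ℝ C)
    (Fk : Fin R → Fin N → ℝ) (hFk : Fk ∈ C)
    (hBk : ∀ r, balanceFun N lam (Fk r) ≠ 0)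
    (Vk : Fin R → Fin N → ℝ)
    (hVk : ∀ r, Vk r = fun i =>
      (Δ * clusterEnergy N w lam (Fk r) / balanceFun N lam (Fk r)) *
        medSubgrad N lam (Fk r) i)
    (Fk1 : Fin R → Fin N → ℝ) (hFk1 : Fk1 ∈ C)
    (hmin : ∀ G ∈ C,
      (∑ r, (Δ / balanceFun N lam (Fk r)) * totalVariation N w (Fk1 r)) +
          (1 / 2) * ∑ r, ∑ i, (Fk1 r i - (Fk r i + Vk r i)) ^ 2 ≤
        (∑ r, (Δ / balanceFun N lam (Fk r)) * totalVariation N w (G r)) +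
          (1 / 2) * ∑ r, ∑ i, (G r i - (Fk r i + Vk r i)) ^ 2) :
    Fk1 ∈ C ∧
      ((∀ r, balanceFun N lam (Fk1 r) ≠ 0) →
        ∑ r, (balanceFun N lam (Fk1 r) / balanceFun N lam (Fk r)) *
            (clusterEnergy N w lam (Fk r) - clusterEnergy N w lam (Fk1 r)) ≥
          (∑ r, ∑ i, (Fk r i - Fk1 r i) ^ 2) / Δ) := by
  refine ⟨hFk1, fun hB1 => ?_⟩
  have hBpos : ∀ r, 0 < balanceFun N lam (Fk r) := fun r =>
    lt_of_le_of_ne (balance_nonneg N lam hlam (Fk r)) (Ne.symm (hBk r))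
  have hB1pos : ∀ r, 0 < balanceFun N lam (Fk1 r) := fun r =>
    lt_of_le_of_ne (balance_nonneg N lam hlam (Fk1 r)) (Ne.symm (hB1 r))
  set φ1 := ∑ r, (Δ / balanceFun N lam (Fk r)) * totalVariation N w (Fk1 r) with hφ1
  set φ0 := ∑ r, (Δ / balanceFun N lam (Fk r)) * totalVariation N w (Fk r) with hφ0
  set D := ∑ r, ∑ i, (Fk r i - Fk1 r i) ^ 2 with hD
  set q1 := ∑ r, ∑ i, (Fk1 r i - (Fk r i + Vk r i)) ^ 2 with hq1
  set A := ∑ r, ∑ i, (Fk1 r i - (Fk r i + Vk r i)) * (Fk r i - Fk1 r i) with hA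
  set P := ∑ r, ∑ i, Vk r i * (Fk1 r i - Fk r i) with hP
  have hDnn : 0 ≤ D := Finset.sum_nonneg fun r _ =>
    Finset.sum_nonneg fun i _ => sq_nonneg _
  -- step inequality for all t ∈ (0,1]
  have hstep : ∀ t : ℝ, 0 < t → t ≤ 1 → φ1 ≤ φ0 + A + t / 2 * D := by
    intro t ht ht1
    have hGt : (fun r i => (1 - t) * Fk1 r i + t * Fk r i) ∈ C := by
      have h1 : (fun r i => (1 - t) * Fk1 r i + t * Fk r i) = (1-t) • Fk1 + t • Fk := by
        funext r i
        simp [Pi.smul_apply, smul_eq_mul]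
      rw [h1]
      exact hCconv hFk1 hFk (by linarith : (0:ℝ) ≤ 1 - t) ht.le (by ring)
    have hmin' := hmin _ hGt
    -- convexity bound on the TV part
    have hφGt : ∑ r, (Δ / balanceFun N lam (Fk r)) *
        totalVariation N w (fun i => (1 - t) * Fk1 r i + t * Fk r i)
        ≤ (1 - t) * φ1 + t * φ0 := by
      have hb : ∀ r ∈ Finset.univ, (Δ / balanceFun N lam (Fk r)) *
          totalVariation N w (fun i => (1 - t) * Fk1 r i + t * Fk r i)
          ≤ (1 - t) * ((Δ / balanceFun N lam (Fk r)) * totalVariation N w (Fk1 r))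
            + t * ((Δ / balanceFun N lam (Fk r)) * totalVariation N w (Fk r)) := by
        intro r _
        have hc : 0 ≤ Δ / balanceFun N lam (Fk r) := le_of_lt (div_pos hΔ (hBpos r))
        have htv := tv_convex N w hnonneg (Fk1 r) (Fk r) t ht.le ht1
        calc (Δ / balanceFun N lam (Fk r)) *
            totalVariation N w (fun i => (1 - t) * Fk1 r i + t * Fk r i)
            ≤ (Δ / balanceFun N lam (Fk r)) *
              ((1-t) * totalVariation N w (Fk1 r) + t * totalVariation N w (Fk r)) :=
              mul_le_mul_of_nonneg_left htv hc
          _ = (1 - t) * ((Δ / balanceFun N lam (Fk r)) * totalVariation N w (Fk1 r))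
              + t * ((Δ / balanceFun N lam (Fk r)) * totalVariation N w (Fk r)) := by ring
      calc ∑ r, (Δ / balanceFun N lam (Fk r)) *
          totalVariation N w (fun i => (1 - t) * Fk1 r i + t * Fk r i)
          ≤ ∑ r, ((1 - t) * ((Δ / balanceFun N lam (Fk r)) * totalVariation N w (Fk1 r))
            + t * ((Δ / balanceFun N lam (Fk r)) * totalVariation N w (Fk r))) :=
            Finset.sum_le_sum hb
        _ = (1 - t) * φ1 + t * φ0 := by
            rw [Finset.sum_add_distrib, ← Finset.mul_sum, ← Finset.mul_sum, hφ1, hφ0]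
    -- quadratic expansion
    have hqt : ∑ r, ∑ i, ((1 - t) * Fk1 r i + t * Fk r i - (Fk r i + Vk r i)) ^ 2
        = q1 + (2 * t) * A + t ^ 2 * D := by
      calc ∑ r, ∑ i, ((1 - t) * Fk1 r i + t * Fk r i - (Fk r i + Vk r i)) ^ 2
          = ∑ r, ∑ i, ((Fk1 r i - (Fk r i + Vk r i)) ^ 2
            + (2 * t) * ((Fk1 r i - (Fk r i + Vk r i)) * (Fk r i - Fk1 r i))
            + t ^ 2 * ((Fk r i - Fk1 r i) ^ 2)) := by
            apply Finset.sum_congr rfl; intro r _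
            apply Finset.sum_congr rfl; intro i _
            ring
        _ = q1 + (2 * t) * A + t ^ 2 * D := double_sum_comb R N _ _ _ _ _
    rw [hqt] at hmin'
    have h9 : t * φ1 ≤ t * (φ0 + A + t / 2 * D) := by nlinarith [hmin', hφGt]
    exact le_of_mul_le_mul_left h9 ht
  -- pass to the limit t → 0
  have hlim : φ1 ≤ φ0 + A := by
    apply le_of_forall_pos_le_add
    intro ε hε
    have hD1 : (0:ℝ) < D + 1 := by linarith
    set t := min 1 (ε / (D + 1)) with htdef
    have ht0 : 0 < t := lt_min one_pos (div_pos hε hD1)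
    have ht1 : t ≤ 1 := min_le_left _ _
    have h := hstep t ht0 ht1
    have htD : t * D ≤ ε := by
      calc t * D ≤ (ε / (D + 1)) * D :=
            mul_le_mul_of_nonneg_right (min_le_right _ _) hDnn
        _ ≤ ε := by
            rw [div_mul_eq_mul_div, div_le_iff₀ hD1]
            nlinarith
    linarith
  -- A = P - D
  have hAP : A + D = P := by
    rw [hA, hD, hP]
    rw [← Finset.sum_add_distrib]
    apply Finset.sum_congr rfl; intro r _
    rw [← Finset.sum_add_distrib]
    apply Finset.sum_congr rfl; intro i _
    ring
  have hkey : φ1 + D ≤ φ0 + P := by linarith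
  -- subgradient bound on P
  have hPb : P ≤ ∑ r, (Δ * clusterEnergy N w lam (Fk r) / balanceFun N lam (Fk r)) *
      (balanceFun N lam (Fk1 r) - balanceFun N lam (Fk r)) := by
    rw [hP]
    apply Finset.sum_le_sum
    intro r _
    have hd : 0 ≤ Δ * clusterEnergy N w lam (Fk r) / balanceFun N lam (Fk r) := by
      have h1 : 0 ≤ clusterEnergy N w lam (Fk r) :=
        div_nonneg (tv_nonneg N w hnonneg (Fk r)) (hBpos r).le
      exact div_nonneg (mul_nonneg hΔ.le h1) (hBpos r).le
    have hsg := subgrad_ineq N lam hlam hk (Fk r) (Fk1 r)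
    calc ∑ i, Vk r i * (Fk1 r i - Fk r i)
        = (Δ * clusterEnergy N w lam (Fk r) / balanceFun N lam (Fk r)) *
          ∑ i, medSubgrad N lam (Fk r) i * (Fk1 r i - Fk r i) := by
          rw [hVk r, Finset.mul_sum]
          apply Finset.sum_congr rfl; intro i _; ring
      _ ≤ (Δ * clusterEnergy N w lam (Fk r) / balanceFun N lam (Fk r)) *
          (balanceFun N lam (Fk1 r) - balanceFun N lam (Fk r)) :=
          mul_le_mul_of_nonneg_left (by linarith) hd
  -- final algebra
  rw [ge_iff_le, div_le_iff₀ hΔ]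
  have hident : ∀ r, ((balanceFun N lam (Fk1 r) / balanceFun N lam (Fk r)) *
      (clusterEnergy N w lam (Fk r) - clusterEnergy N w lam (Fk1 r))) * Δ
      = (Δ * clusterEnergy N w lam (Fk r) / balanceFun N lam (Fk r)) *
          (balanceFun N lam (Fk1 r) - balanceFun N lam (Fk r))
        + (Δ / balanceFun N lam (Fk r)) * totalVariation N w (Fk r)
        - (Δ / balanceFun N lam (Fk r)) * totalVariation N w (Fk1 r) := by
    intro r
    simp only [clusterEnergy]
    field_simp [hBk r, hB1 r]
    ring
  rw [Finset.sum_mul, Finset.sum_congr rfl (fun r _ => hident r)]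
  rw [Finset.sum_sub_distrib, Finset.sum_add_distrib]
  rw [← hφ0, ← hφ1]
  linarith
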